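/- For all n, ∑_{σ ∈ S_n(321,231)} y^{exc(σ)} = ∑_{k ≥ 0} C(n, 2k) y^k, where exc(σ) is the number of excedances. -/

import Mathlib

open Finset Polynomial

/-- A crossing of a permutation of [n] (0-based encoding of the 1-based definition):
`i < j < σ(i) < σ(j)` or `σ(i) < σ(j) ≤ i < j` (1-based). -/
def IsCross {n : ℕ} (σ : Equiv.Perm (Fin n)) (i j : Fin n) : Prop :=
  (i < j ∧ (j : ℕ) < (σ i : ℕ) ∧ σ i < σ j) ∨
  (σ i < σ j ∧ (σ j : ℕ) ≤ (i : ℕ) ∧ i < j)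

instance {n : ℕ} (σ : Equiv.Perm (Fin n)) (i j : Fin n) : Decidable (IsCross σ i j) := by
  unfold IsCross; infer_instance

/-- the number of crossings -/
def cr {n : ℕ} (σ : Equiv.Perm (Fin n)) : ℕ :=
  (Finset.univ.filter (fun p : Fin n × Fin n => IsCross σ p.1 p.2)).card

/-- occurrence of a length-3 pattern -/
def Contains3 {n : ℕ} (σ : Equiv.Perm (Fin n)) (τ : Fin 3 → Fin 3) : Prop :=
  ∃ i j l : Fin n, i < j ∧ j < l ∧
    (τ 0 < τ 1 ↔ σ i < σ j) ∧ (τ 0 < τ 2 ↔ σ i < σ l) ∧ (τ 1 < τ 2 ↔ σ j < σ l)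

instance {n : ℕ} (σ : Equiv.Perm (Fin n)) (τ : Fin 3 → Fin 3) :
    Decidable (Contains3 σ τ) := by
  unfold Contains3; infer_instance

def Avoids {n : ℕ} (σ : Equiv.Perm (Fin n)) (τ : Fin 3 → Fin 3) : Prop := ¬ Contains3 σ τ

instance {n : ℕ} (σ : Equiv.Perm (Fin n)) (τ : Fin 3 → Fin 3) : Decidable (Avoids σ τ) := by
  unfold Avoids; infer_instance

def p123 : Fin 3 → Fin 3 := ![0, 1, 2]
def p132 : Fin 3 → Fin 3 := ![0, 2, 1]
def p213 : Fin 3 → Fin 3 := ![1, 0, 2]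
def p231 : Fin 3 → Fin 3 := ![1, 2, 0]
def p312 : Fin 3 → Fin 3 := ![2, 0, 1]
def p321 : Fin 3 → Fin 3 := ![2, 1, 0]


/-- number of excedances -/
def exc {n : ℕ} (σ : Equiv.Perm (Fin n)) : ℕ :=
  (Finset.univ.filter (fun i : Fin n => i < σ i)).card


def embFun {n : ℕ} (m : ℕ) (hm : m ≤ n) (τ : Fin (n - m) → Fin (n - m)) (i : Fin (n + 1)) :
    Fin (n + 1) :=
  if h0 : (i : ℕ) = 0 then ⟨m, by omega⟩
  else if h : (i : ℕ) ≤ m then ⟨(i : ℕ) - 1, by omega⟩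
  else ⟨m + 1 + (τ ⟨(i : ℕ) - (m + 1), by omega⟩ : ℕ), by
    have := (τ ⟨(i : ℕ) - (m + 1), by omega⟩).isLt; omega⟩

def embInv {n : ℕ} (m : ℕ) (hm : m ≤ n) (τ : Fin (n - m) → Fin (n - m)) (j : Fin (n + 1)) :
    Fin (n + 1) :=
  if h0 : (j : ℕ) = m then ⟨0, by omega⟩
  else if h : (j : ℕ) < m then ⟨(j : ℕ) + 1, by omega⟩
  else ⟨m + 1 + (τ ⟨(j : ℕ) - (m + 1), by omega⟩ : ℕ), by
    have := (τ ⟨(j : ℕ) - (m + 1), by omega⟩).isLt; omega⟩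

lemma embFun_zero {n : ℕ} (m : ℕ) (hm : m ≤ n) (τ : Fin (n - m) → Fin (n - m))
    (i : Fin (n + 1)) (h : (i : ℕ) = 0) : ((embFun m hm τ i : Fin (n + 1)) : ℕ) = m := by
  simp [embFun, h]

lemma embFun_head {n : ℕ} (m : ℕ) (hm : m ≤ n) (τ : Fin (n - m) → Fin (n - m))
    (i : Fin (n + 1)) (h0 : (i : ℕ) ≠ 0) (h : (i : ℕ) ≤ m) :
    ((embFun m hm τ i : Fin (n + 1)) : ℕ) = (i : ℕ) - 1 := by
  simp [embFun, h0, h]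

lemma embFun_tail {n : ℕ} (m : ℕ) (hm : m ≤ n) (τ : Fin (n - m) → Fin (n - m))
    (i : Fin (n + 1)) (h : m < (i : ℕ)) :
    ((embFun m hm τ i : Fin (n + 1)) : ℕ)
      = m + 1 + (τ ⟨(i : ℕ) - (m + 1), by omega⟩ : ℕ) := by
  have h0 : ¬ (i : ℕ) = 0 := by omega
  have h1 : ¬ (i : ℕ) ≤ m := by omega
  simp [embFun, h0, h1]

lemma embInv_m {n : ℕ} (m : ℕ) (hm : m ≤ n) (τ : Fin (n - m) → Fin (n - m))
    (j : Fin (n + 1)) (h : (j : ℕ) = m) : ((embInv m hm τ j : Fin (n + 1)) : ℕ) = 0 := by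
  simp [embInv, h]

lemma embInv_head {n : ℕ} (m : ℕ) (hm : m ≤ n) (τ : Fin (n - m) → Fin (n - m))
    (j : Fin (n + 1)) (h : (j : ℕ) < m) :
    ((embInv m hm τ j : Fin (n + 1)) : ℕ) = (j : ℕ) + 1 := by
  have h0 : ¬ (j : ℕ) = m := by omega
  simp [embInv, h0, h]

lemma embInv_tail {n : ℕ} (m : ℕ) (hm : m ≤ n) (τ : Fin (n - m) → Fin (n - m))
    (j : Fin (n + 1)) (h : m < (j : ℕ)) :
    ((embInv m hm τ j : Fin (n + 1)) : ℕ)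
      = m + 1 + (τ ⟨(j : ℕ) - (m + 1), by omega⟩ : ℕ) := by
  have h0 : ¬ (j : ℕ) = m := by omega
  have h1 : ¬ (j : ℕ) < m := by omega
  simp [embInv, h0, h1]

def emb {n : ℕ} (m : ℕ) (hm : m ≤ n) (τ : Equiv.Perm (Fin (n - m))) :
    Equiv.Perm (Fin (n + 1)) where
  toFun := embFun m hm τ
  invFun := embInv m hm τ.symm
  left_inv := by
    intro i
    show embInv m hm (⇑τ.symm) (embFun m hm (⇑τ) i) = i
    apply Fin.ext
    rcases Nat.lt_or_ge (i : ℕ) (m + 1) with hlt | hgt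
    · by_cases h0 : (i : ℕ) = 0
      · have e1 := embFun_zero m hm (⇑τ) i h0
        have e2 := embInv_m m hm (⇑τ.symm) (embFun m hm (⇑τ) i) e1
        omega
      · have e1 := embFun_head m hm (⇑τ) i h0 (by omega)
        have e2 := embInv_head m hm (⇑τ.symm) (embFun m hm (⇑τ) i) (by omega)
        omega
    · have e1 := embFun_tail m hm (⇑τ) i (by omega : m < (i:ℕ))
      have hlt2 : m < ((embFun m hm (⇑τ) i : Fin (n + 1)) : ℕ) := by omega
      have e2 := embInv_tail m hm (⇑τ.symm) (embFun m hm (⇑τ) i) hlt2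
      have harg : (⟨((embFun m hm (⇑τ) i : Fin (n + 1)) : ℕ) - (m + 1), by
          have := (embFun m hm (⇑τ) i).isLt; omega⟩ : Fin (n - m))
          = τ ⟨(i : ℕ) - (m + 1), by omega⟩ := by
        apply Fin.ext; simp only [e1]; omega
      rw [harg, Equiv.symm_apply_apply] at e2
      simp only [Fin.val_mk] at e2
      omega
  right_inv := by
    intro j
    show embFun m hm (⇑τ) (embInv m hm (⇑τ.symm) j) = j
    apply Fin.ext
    rcases Nat.lt_trichotomy (j : ℕ) m with hlt | heq | hgt
    · have e1 := embInv_head m hm (⇑τ.symm) j hlt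
      have e2 := embFun_head m hm (⇑τ) (embInv m hm (⇑τ.symm) j) (by omega) (by omega)
      omega
    · have e1 := embInv_m m hm (⇑τ.symm) j heq
      have e2 := embFun_zero m hm (⇑τ) (embInv m hm (⇑τ.symm) j) e1
      omega
    · have e1 := embInv_tail m hm τ.symm j hgt
      have hlt2 : m < ((embInv m hm τ.symm j : Fin (n + 1)) : ℕ) := by omega
      have e2 := embFun_tail m hm (⇑τ) (embInv m hm (⇑τ.symm) j) hlt2
      have harg : (⟨((embInv m hm τ.symm j : Fin (n + 1)) : ℕ) - (m + 1), by
          have := (embInv m hm τ.symm j).isLt; omega⟩ : Fin (n - m))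
          = τ.symm ⟨(j : ℕ) - (m + 1), by omega⟩ := by
        apply Fin.ext; simp only [e1]; omega
      rw [harg, Equiv.apply_symm_apply] at e2
      simp only [Fin.val_mk] at e2
      omega

lemma emb_zero {n : ℕ} (m : ℕ) (hm : m ≤ n) (τ : Equiv.Perm (Fin (n - m)))
    (i : Fin (n + 1)) (h : (i : ℕ) = 0) : ((emb m hm τ i : Fin (n + 1)) : ℕ) = m :=
  embFun_zero m hm (⇑τ) i h

lemma emb_head {n : ℕ} (m : ℕ) (hm : m ≤ n) (τ : Equiv.Perm (Fin (n - m)))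
    (i : Fin (n + 1)) (h0 : (i : ℕ) ≠ 0) (h : (i : ℕ) ≤ m) :
    ((emb m hm τ i : Fin (n + 1)) : ℕ) = (i : ℕ) - 1 :=
  embFun_head m hm (⇑τ) i h0 h

lemma emb_tail {n : ℕ} (m : ℕ) (hm : m ≤ n) (τ : Equiv.Perm (Fin (n - m)))
    (i : Fin (n + 1)) (h : m < (i : ℕ)) :
    ((emb m hm τ i : Fin (n + 1)) : ℕ)
      = m + 1 + (τ ⟨(i : ℕ) - (m + 1), by omega⟩ : ℕ) :=
  embFun_tail m hm (⇑τ) i h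

def Bad {n : ℕ} (σ : Equiv.Perm (Fin n)) : Prop :=
  ∃ i j l : Fin n, i < j ∧ j < l ∧ σ l < σ i ∧ σ l < σ j

lemma bad_iff {n : ℕ} (σ : Equiv.Perm (Fin n)) :
    Bad σ ↔ Contains3 σ p321 ∨ Contains3 σ p231 := by
  constructor
  · rintro ⟨i, j, l, hij, hjl, hli, hlj⟩
    have hij' : σ i ≠ σ j := fun h => absurd (σ.injective h) (ne_of_lt hij)
    rcases hij'.lt_or_gt with h | h
    · right
      exact ⟨i, j, l, hij, hjl, by simp [p231] ; exact h, by simp [p231]; omega,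
        by simp [p231]; omega⟩
    · left
      exact ⟨i, j, l, hij, hjl, by simp [p321]; omega, by simp [p321]; omega,
        by simp [p321]; omega⟩
  · rintro (⟨i, j, l, hij, hjl, h1, h2, h3⟩ | ⟨i, j, l, hij, hjl, h1, h2, h3⟩)
    · refine ⟨i, j, l, hij, hjl, ?_, ?_⟩
      · have : ¬ (σ i < σ l) := by
          intro h; exact absurd (h2.mpr h) (by decide)
        have hne : σ i ≠ σ l := fun h => absurd (σ.injective h) (by omega)
        omega
      · have : ¬ (σ j < σ l) := by
          intro h; exact absurd (h3.mpr h) (by decide)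
        have hne : σ j ≠ σ l := fun h => absurd (σ.injective h) (by omega)
        omega
    · refine ⟨i, j, l, hij, hjl, ?_, ?_⟩
      · have : ¬ (σ i < σ l) := by
          intro h; exact absurd (h2.mpr h) (by decide)
        have hne : σ i ≠ σ l := fun h => absurd (σ.injective h) (by omega)
        omega
      · have : ¬ (σ j < σ l) := by
          intro h; exact absurd (h3.mpr h) (by decide)
        have hne : σ j ≠ σ l := fun h => absurd (σ.injective h) (by omega)
        omega

lemma avoids_iff_not_bad {n : ℕ} (σ : Equiv.Perm (Fin n)) :
    (Avoids σ p321 ∧ Avoids σ p231) ↔ ¬ Bad σ := by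
  unfold Avoids
  rw [bad_iff]
  tauto

def shiftEmb {n m : ℕ} (hm : m ≤ n) : Fin (n - m) ↪ Fin (n + 1) :=
  ⟨fun x => ⟨m + 1 + (x : ℕ), by have := x.isLt; omega⟩, by
    intro a b h
    have := congrArg Fin.val h
    simp only [Fin.val_mk] at this
    exact Fin.ext (by omega)⟩

@[simp] lemma shiftEmb_val {n m : ℕ} (hm : m ≤ n) (x : Fin (n - m)) :
    ((shiftEmb hm x : Fin (n + 1)) : ℕ) = m + 1 + (x : ℕ) := rfl

lemma exc_emb {n m : ℕ} (hm : m ≤ n) (τ : Equiv.Perm (Fin (n - m))) :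
    exc (emb m hm τ) = exc τ + (if m = 0 then 0 else 1) := by
  unfold exc
  have hset : (univ.filter (fun i : Fin (n + 1) => i < emb m hm τ i))
      = ((univ.filter (fun x : Fin (n - m) => x < τ x)).map (shiftEmb hm))
        ∪ (if m = 0 then (∅ : Finset (Fin (n + 1))) else {(⟨0, n.succ_pos⟩ : Fin (n + 1))}) := by
    ext i
    simp only [mem_union, mem_filter, mem_map, mem_univ, true_and]
    constructor
    · intro hi
      rw [Fin.lt_def] at hi
      by_cases h0 : (i : ℕ) = 0
      · right
        rw [emb_zero m hm τ i h0] at hi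
        have hm0 : ¬ m = 0 := by omega
        rw [if_neg hm0]
        simp only [mem_singleton]
        exact Fin.ext h0
      · by_cases h1 : (i : ℕ) ≤ m
        · exfalso
          rw [emb_head m hm τ i h0 h1] at hi
          omega
        · left
          rw [emb_tail m hm τ i (by omega)] at hi
          refine ⟨⟨(i : ℕ) - (m + 1), by omega⟩, ?_, ?_⟩
          · rw [Fin.lt_def]
            simp only [Fin.val_mk]
            omega
          · exact Fin.ext (by simp only [shiftEmb_val, Fin.val_mk]; omega)
    · rintro (⟨x, hx, hxi⟩ | hi)
      · rw [Fin.lt_def] at hx ⊢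
        subst hxi
        rw [emb_tail m hm τ _ (by simp only [shiftEmb_val]; omega)]
        have harg : (⟨((shiftEmb hm x : Fin (n+1)) : ℕ) - (m + 1), by
            have := (shiftEmb hm x).isLt; omega⟩ : Fin (n - m)) = x := by
          apply Fin.ext; simp only [shiftEmb_val, Fin.val_mk]; omega
        rw [harg]
        simp only [shiftEmb_val]
        omega
      · by_cases hm0 : m = 0
        · rw [if_pos hm0] at hi; exact absurd hi (notMem_empty _)
        · rw [if_neg hm0] at hi
          simp only [mem_singleton] at hi
          subst hi
          rw [Fin.lt_def, emb_zero m hm τ _ rfl]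
          simp only [Fin.val_mk]
          omega
  rw [hset, card_union_of_disjoint, card_map]
  · congr 1
    split_ifs with hm0
    · simp
    · simp
  · rw [disjoint_right]
    intro a ha hmem
    simp only [mem_map] at hmem
    obtain ⟨x, _, hx⟩ := hmem
    split_ifs at ha with hm0
    · exact absurd ha (notMem_empty _)
    · simp only [mem_singleton] at ha
      subst ha
      have := congrArg Fin.val hx
      simp only [shiftEmb_val, Fin.val_mk] at this
      omega

lemma emb_shift_val {n m : ℕ} (hm : m ≤ n) (τ : Equiv.Perm (Fin (n - m)))
    (x : Fin (n - m)) :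
    ((emb m hm τ) (⟨m + 1 + (x : ℕ), by have := x.isLt; omega⟩ : Fin (n + 1)) : ℕ)
      = m + 1 + ((τ x : Fin (n - m)) : ℕ) := by
  rw [emb_tail m hm τ _ (by simp only [Fin.val_mk]; omega)]
  have harg : (⟨((⟨m + 1 + (x : ℕ), by have := x.isLt; omega⟩ : Fin (n + 1)) : ℕ) - (m + 1),
      by have := x.isLt; simp only [Fin.val_mk]; omega⟩ : Fin (n - m)) = x :=
    Fin.ext (by simp only [Fin.val_mk]; omega)
  rw [harg]

lemma bad_emb_iff {n m : ℕ} (hm : m ≤ n) (τ : Equiv.Perm (Fin (n - m))) :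
    Bad (emb m hm τ) ↔ Bad τ := by
  constructor
  · rintro ⟨i, j, l, hij, hjl, hli, hlj⟩
    rw [Fin.lt_def] at hij hjl hli hlj
    have hl : m < (l : ℕ) := by
      by_contra hl
      push_neg at hl
      have hj0 : (j : ℕ) ≠ 0 := by omega
      have ej := emb_head m hm τ j hj0 (by omega)
      have hl0 : (l : ℕ) ≠ 0 := by omega
      have el := emb_head m hm τ l hl0 (by omega)
      omega
    have hσl : m + 1 ≤ ((emb m hm τ) l : ℕ) := by
      rw [emb_tail m hm τ l hl]; omega
    have hi : m < (i : ℕ) := by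
      by_contra hi
      push_neg at hi
      by_cases h0 : (i : ℕ) = 0
      · rw [emb_zero m hm τ i h0] at hli; omega
      · rw [emb_head m hm τ i h0 hi] at hli; omega
    have hj : m < (j : ℕ) := by omega
    have ei := emb_tail m hm τ i hi
    have ej := emb_tail m hm τ j hj
    have el := emb_tail m hm τ l hl
    refine ⟨⟨(i : ℕ) - (m + 1), by omega⟩, ⟨(j : ℕ) - (m + 1), by omega⟩,
        ⟨(l : ℕ) - (m + 1), by omega⟩, ?_, ?_, ?_, ?_⟩
    · rw [Fin.lt_def]; simp only [Fin.val_mk]; omega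
    · rw [Fin.lt_def]; simp only [Fin.val_mk]; omega
    · rw [Fin.lt_def]
      rw [ei, el] at hli
      exact Nat.lt_of_add_lt_add_left hli
    · rw [Fin.lt_def]
      rw [ej, el] at hlj
      exact Nat.lt_of_add_lt_add_left hlj
  · rintro ⟨i, j, l, hij, hjl, hli, hlj⟩
    rw [Fin.lt_def] at hij hjl hli hlj
    have hi := i.isLt
    have hj := j.isLt
    have hl := l.isLt
    refine ⟨⟨m + 1 + (i : ℕ), by omega⟩, ⟨m + 1 + (j : ℕ), by omega⟩,
        ⟨m + 1 + (l : ℕ), by omega⟩, ?_, ?_, ?_, ?_⟩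
    · rw [Fin.lt_def]; simp only [Fin.val_mk]; omega
    · rw [Fin.lt_def]; simp only [Fin.val_mk]; omega
    · rw [Fin.lt_def, emb_shift_val hm τ l, emb_shift_val hm τ i]
      omega
    · rw [Fin.lt_def, emb_shift_val hm τ l, emb_shift_val hm τ j]
      omega

lemma head_vals {n : ℕ} (σ : Equiv.Perm (Fin (n + 1))) (hb : ¬ Bad σ) :
    ∀ (v : ℕ) (x : Fin (n + 1)), (x : ℕ) = v + 1 →
      v < ((σ ⟨0, n.succ_pos⟩ : Fin (n + 1)) : ℕ) → ((σ x : Fin (n + 1)) : ℕ) = v := by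
  intro v
  induction v using Nat.strong_induction_on with
  | _ v ih =>
    intro x hx hv
    have hm := (σ ⟨0, n.succ_pos⟩).isLt
    have hvn : v < n + 1 := by omega
    set p := σ.symm ⟨v, hvn⟩ with hpdef
    have hp1v : ((σ p : Fin (n + 1)) : ℕ) = v := by
      rw [hpdef, Equiv.apply_symm_apply]
    have hp0 : (p : ℕ) ≠ 0 := by
      intro h
      have h2 : p = ⟨0, n.succ_pos⟩ := Fin.ext h
      rw [h2] at hp1v
      omega
    have hpge : v + 1 ≤ (p : ℕ) := by
      by_contra hc
      push_neg at hc
      have := ih ((p : ℕ) - 1) (by omega) p (by omega) (by omega)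
      omega
    rcases eq_or_lt_of_le hpge with heq | hgt
    · have hpeq : x = p := Fin.ext (by omega)
      rw [hpeq]
      exact hp1v
    · exfalso
      have hu1 : ((σ x : Fin (n + 1)) : ℕ) ≠ v := by
        intro h
        have h2 : σ x = σ p := Fin.ext (by omega)
        have h3 := congrArg Fin.val (σ.injective h2)
        omega
      have hu2 : ∀ w, w < v → ((σ x : Fin (n + 1)) : ℕ) ≠ w := by
        intro w hwv h
        have hw1 : w + 1 < n + 1 := by omega
        have hw2 := ih w hwv ⟨w + 1, hw1⟩ rfl (by omega)
        have h2 : σ x = σ ⟨w + 1, hw1⟩ := Fin.ext (by omega)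
        have h3 := congrArg Fin.val (σ.injective h2)
        simp only [Fin.val_mk] at h3
        omega
      have huv : v < ((σ x : Fin (n + 1)) : ℕ) := by
        rcases Nat.lt_trichotomy ((σ x : Fin (n + 1)) : ℕ) v with h | h | h
        · exact absurd rfl (hu2 _ h)
        · exact absurd h hu1
        · exact h
      refine hb ⟨⟨0, n.succ_pos⟩, x, p, ?_, ?_, ?_, ?_⟩
      · exact Fin.lt_def.mpr (by simp only [Fin.val_mk]; omega)
      · exact Fin.lt_def.mpr (by omega :
          ((x : Fin (n + 1)) : ℕ) < ((p : Fin (n + 1)) : ℕ))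
      · exact Fin.lt_def.mpr (by omega :
          ((σ p : Fin (n + 1)) : ℕ) < ((σ ⟨0, n.succ_pos⟩ : Fin (n + 1)) : ℕ))
      · exact Fin.lt_def.mpr (by omega :
          ((σ p : Fin (n + 1)) : ℕ) < ((σ x : Fin (n + 1)) : ℕ))

lemma tail_ge {n : ℕ} (σ : Equiv.Perm (Fin (n + 1))) (hb : ¬ Bad σ)
    (i : Fin (n + 1)) (hi : ((σ ⟨0, n.succ_pos⟩ : Fin (n + 1)) : ℕ) < (i : ℕ)) :
    ((σ ⟨0, n.succ_pos⟩ : Fin (n + 1)) : ℕ) < ((σ i : Fin (n + 1)) : ℕ) := by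
  have hm := (σ ⟨0, n.succ_pos⟩).isLt
  rcases Nat.lt_trichotomy ((σ i : Fin (n + 1)) : ℕ) ((σ ⟨0, n.succ_pos⟩ : Fin (n + 1)) : ℕ)
    with h | h | h
  · exfalso
    have hvn : ((σ i : Fin (n + 1)) : ℕ) + 1 < n + 1 := by omega
    have hw := head_vals σ hb ((σ i : Fin (n + 1)) : ℕ) ⟨_, hvn⟩ rfl (by omega)
    have h2 : σ (⟨((σ i : Fin (n + 1)) : ℕ) + 1, hvn⟩ : Fin (n + 1)) = σ i := Fin.ext (by omega)
    have h3 := congrArg Fin.val (σ.injective h2)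
    simp only [Fin.val_mk] at h3
    omega
  · exfalso
    have h2 : σ i = σ ⟨0, n.succ_pos⟩ := Fin.ext (by omega)
    have h3 := congrArg Fin.val (σ.injective h2)
    simp only [Fin.val_mk] at h3
    omega
  · exact h

lemma symm_tail_ge {n : ℕ} (σ : Equiv.Perm (Fin (n + 1))) (hb : ¬ Bad σ)
    (j : Fin (n + 1)) (hj : ((σ ⟨0, n.succ_pos⟩ : Fin (n + 1)) : ℕ) < (j : ℕ)) :
    ((σ ⟨0, n.succ_pos⟩ : Fin (n + 1)) : ℕ) < ((σ.symm j : Fin (n + 1)) : ℕ) := by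
  have hm := (σ ⟨0, n.succ_pos⟩).isLt
  have hσq : ((σ (σ.symm j) : Fin (n + 1)) : ℕ) = (j : ℕ) := by
    rw [Equiv.apply_symm_apply]
  rcases Nat.lt_or_ge ((σ ⟨0, n.succ_pos⟩ : Fin (n + 1)) : ℕ) ((σ.symm j : Fin (n + 1)) : ℕ)
    with h | h
  · exact h
  · exfalso
    by_cases h0 : ((σ.symm j : Fin (n + 1)) : ℕ) = 0
    · have h2 : σ.symm j = ⟨0, n.succ_pos⟩ := Fin.ext h0
      rw [h2] at hσq
      omega
    · have hw := head_vals σ hb (((σ.symm j : Fin (n + 1)) : ℕ) - 1) (σ.symm j)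
        (by omega) (by omega)
      omega

def tailFun {n : ℕ} (f : Fin (n + 1) → Fin (n + 1)) (m : ℕ) (hm : m ≤ n)
    (h : ∀ x : Fin (n + 1), m < (x : ℕ) → m < ((f x : Fin (n + 1)) : ℕ))
    (x : Fin (n - m)) : Fin (n - m) :=
  ⟨((f ⟨m + 1 + (x : ℕ), by have := x.isLt; omega⟩ : Fin (n + 1)) : ℕ) - (m + 1), by
    have h2 := h ⟨m + 1 + (x : ℕ), by have := x.isLt; omega⟩ (by simp only [Fin.val_mk]; omega)
    have h3 := (f ⟨m + 1 + (x : ℕ), by have := x.isLt; omega⟩).isLt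
    omega⟩

lemma tailFun_val {n : ℕ} (f : Fin (n + 1) → Fin (n + 1)) (m : ℕ) (hm : m ≤ n)
    (h : ∀ x : Fin (n + 1), m < (x : ℕ) → m < ((f x : Fin (n + 1)) : ℕ))
    (x : Fin (n - m)) :
    ((tailFun f m hm h x : Fin (n - m)) : ℕ)
      = ((f ⟨m + 1 + (x : ℕ), by have := x.isLt; omega⟩ : Fin (n + 1)) : ℕ) - (m + 1) := rfl

def tailPerm {n : ℕ} (σ : Equiv.Perm (Fin (n + 1))) (m : ℕ) (hm : m ≤ n)
    (h1 : ∀ x : Fin (n + 1), m < (x : ℕ) → m < ((σ x : Fin (n + 1)) : ℕ))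
    (h2 : ∀ y : Fin (n + 1), m < (y : ℕ) → m < ((σ.symm y : Fin (n + 1)) : ℕ)) :
    Equiv.Perm (Fin (n - m)) where
  toFun := tailFun (⇑σ) m hm h1
  invFun := tailFun (⇑σ.symm) m hm h2
  left_inv := by
    intro x
    have hxlt := x.isLt
    have pfA : m + 1 + (x : ℕ) < n + 1 := by omega
    have hV := (σ ⟨m + 1 + (x : ℕ), pfA⟩).isLt
    have hVm : m < ((σ ⟨m + 1 + (x : ℕ), pfA⟩ : Fin (n + 1)) : ℕ) :=
      h1 _ (by simp only [Fin.val_mk]; omega)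
    have pfB : m + 1 + (((σ ⟨m + 1 + (x : ℕ), pfA⟩ : Fin (n + 1)) : ℕ) - (m + 1)) < n + 1 := by
      omega
    apply Fin.ext
    show ((σ.symm ⟨m + 1 + (((σ ⟨m + 1 + (x : ℕ), pfA⟩ : Fin (n + 1)) : ℕ) - (m + 1)), pfB⟩ :
        Fin (n + 1)) : ℕ) - (m + 1) = (x : ℕ)
    have harg : (⟨m + 1 + (((σ ⟨m + 1 + (x : ℕ), pfA⟩ : Fin (n + 1)) : ℕ) - (m + 1)), pfB⟩ :
        Fin (n + 1)) = σ ⟨m + 1 + (x : ℕ), pfA⟩ := Fin.ext (by simp only [Fin.val_mk]; omega)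
    rw [harg, Equiv.symm_apply_apply]
    simp only [Fin.val_mk]
    omega
  right_inv := by
    intro x
    have hxlt := x.isLt
    have pfA : m + 1 + (x : ℕ) < n + 1 := by omega
    have hV := (σ.symm ⟨m + 1 + (x : ℕ), pfA⟩).isLt
    have hVm : m < ((σ.symm ⟨m + 1 + (x : ℕ), pfA⟩ : Fin (n + 1)) : ℕ) :=
      h2 _ (by simp only [Fin.val_mk]; omega)
    have pfB : m + 1 + (((σ.symm ⟨m + 1 + (x : ℕ), pfA⟩ : Fin (n + 1)) : ℕ) - (m + 1)) < n + 1 := by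
      omega
    apply Fin.ext
    show ((σ ⟨m + 1 + (((σ.symm ⟨m + 1 + (x : ℕ), pfA⟩ : Fin (n + 1)) : ℕ) - (m + 1)), pfB⟩ :
        Fin (n + 1)) : ℕ) - (m + 1) = (x : ℕ)
    have harg : (⟨m + 1 + (((σ.symm ⟨m + 1 + (x : ℕ), pfA⟩ : Fin (n + 1)) : ℕ) - (m + 1)), pfB⟩ :
        Fin (n + 1)) = σ.symm ⟨m + 1 + (x : ℕ), pfA⟩ := Fin.ext (by simp only [Fin.val_mk]; omega)
    rw [harg, Equiv.apply_symm_apply]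
    simp only [Fin.val_mk]
    omega

lemma tailPerm_apply {n : ℕ} (σ : Equiv.Perm (Fin (n + 1))) (m : ℕ) (hm : m ≤ n)
    (h1 : ∀ x : Fin (n + 1), m < (x : ℕ) → m < ((σ x : Fin (n + 1)) : ℕ))
    (h2 : ∀ y : Fin (n + 1), m < (y : ℕ) → m < ((σ.symm y : Fin (n + 1)) : ℕ))
    (x : Fin (n - m)) :
    (tailPerm σ m hm h1 h2) x = tailFun (⇑σ) m hm h1 x := rfl

lemma exists_emb {n : ℕ} (σ : Equiv.Perm (Fin (n + 1))) (hb : ¬ Bad σ) :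
    ∃ τ : Equiv.Perm (Fin (n - ((σ ⟨0, n.succ_pos⟩ : Fin (n + 1)) : ℕ))),
      σ = emb ((σ ⟨0, n.succ_pos⟩ : Fin (n + 1)) : ℕ)
        (by have := (σ ⟨0, n.succ_pos⟩).isLt; omega) τ := by
  have hm := (σ ⟨0, n.succ_pos⟩).isLt
  have hmn : ((σ ⟨0, n.succ_pos⟩ : Fin (n + 1)) : ℕ) ≤ n := by omega
  refine ⟨tailPerm σ _ hmn (fun x hx => tail_ge σ hb x hx) (fun y hy => symm_tail_ge σ hb y hy), ?_⟩
  apply Equiv.ext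
  intro i
  apply Fin.ext
  set m := ((σ ⟨0, n.succ_pos⟩ : Fin (n + 1)) : ℕ) with hmdef
  by_cases h0 : (i : ℕ) = 0
  · rw [emb_zero _ _ _ i h0]
    have h2 : i = ⟨0, n.succ_pos⟩ := Fin.ext h0
    rw [h2]
  · by_cases h1 : (i : ℕ) ≤ m
    · rw [emb_head _ _ _ i h0 h1]
      exact head_vals σ hb ((i : ℕ) - 1) i (by omega) (by omega)
    · rw [emb_tail _ _ _ i (by omega)]
      have hv : ((tailPerm σ m hmn (fun x hx => tail_ge σ hb x hx)
            (fun y hy => symm_tail_ge σ hb y hy)) ⟨(i : ℕ) - (m + 1), by have := i.isLt; omega⟩ : ℕ)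
          = ((σ ⟨m + 1 + ((i : ℕ) - (m + 1)), by have := i.isLt; omega⟩ : Fin (n + 1)) : ℕ) - (m + 1) := by
        rw [tailPerm_apply, tailFun_val]
      rw [hv]
      have harg : (⟨m + 1 + ((i : ℕ) - (m + 1)), by have := i.isLt; omega⟩ : Fin (n + 1)) = i :=
        Fin.ext (by simp only [Fin.val_mk]; omega)
      rw [harg]
      have h2 := tail_ge σ hb i (by omega)
      omega

noncomputable def fpoly (n : ℕ) : Polynomial ℤ :=
  ∑ σ ∈ Finset.univ.filter
      (fun σ : Equiv.Perm (Fin n) => Avoids σ p321 ∧ Avoids σ p231),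
    (Polynomial.X : Polynomial ℤ) ^ exc σ

noncomputable def apoly (n : ℕ) : Polynomial ℤ :=
  ∑ k ∈ Finset.range (n + 1), (n.choose (2 * k) : Polynomial ℤ) * Polynomial.X ^ k

lemma fpoly_zero : fpoly 0 = 1 := by
  rw [fpoly]
  rw [Finset.filter_true_of_mem (fun σ _ => ⟨fun ⟨i, _, _, _⟩ => i.elim0,
    fun ⟨i, _, _, _⟩ => i.elim0⟩)]
  have hexc : ∀ σ : Equiv.Perm (Fin 0), exc σ = 0 := by
    intro σ
    rw [exc]
    apply Finset.card_eq_zero.mpr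
    apply Finset.eq_empty_of_forall_notMem
    intro i
    exact i.elim0
  rw [Finset.sum_congr rfl (fun σ _ => by rw [hexc σ, pow_zero])]
  rw [Finset.sum_const, Finset.card_univ, Fintype.card_perm]
  simp

lemma fiber_sum (n m : ℕ) (hm : m ≤ n) :
    ∑ σ ∈ Finset.univ.filter (fun σ : Equiv.Perm (Fin (n + 1)) =>
        (Avoids σ p321 ∧ Avoids σ p231) ∧ ((σ ⟨0, n.succ_pos⟩ : Fin (n + 1)) : ℕ) = m),
      (Polynomial.X : Polynomial ℤ) ^ exc σ
    = Polynomial.X ^ (if m = 0 then 0 else 1) * fpoly (n - m) := by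
  rw [fpoly, Finset.mul_sum]
  symm
  refine Finset.sum_bij (fun τ _ => emb m hm τ) ?_ ?_ ?_ ?_
  · intro τ hτ
    simp only [Finset.mem_filter, Finset.mem_univ, true_and] at hτ ⊢
    refine ⟨?_, ?_⟩
    · rw [avoids_iff_not_bad, bad_emb_iff hm τ]
      exact (avoids_iff_not_bad τ).mp hτ
    · exact emb_zero m hm τ _ rfl
  · intro τ hτ τ' hτ' h
    apply Equiv.ext
    intro x
    apply Fin.ext
    have hx := x.isLt
    have pfA : m + 1 + (x : ℕ) < n + 1 := by omega
    have h1 := emb_tail m hm τ ⟨m + 1 + (x : ℕ), pfA⟩ (by simp only [Fin.val_mk]; omega)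
    have h2 := emb_tail m hm τ' ⟨m + 1 + (x : ℕ), pfA⟩ (by simp only [Fin.val_mk]; omega)
    have harg : (⟨((⟨m + 1 + (x : ℕ), pfA⟩ : Fin (n + 1)) : ℕ) - (m + 1), by
        simp only [Fin.val_mk]; omega⟩ : Fin (n - m)) = x :=
      Fin.ext (by simp only [Fin.val_mk]; omega)
    rw [harg] at h1 h2
    have h3 := congrArg (fun ρ : Equiv.Perm (Fin (n + 1)) =>
      ((ρ ⟨m + 1 + (x : ℕ), pfA⟩ : Fin (n + 1)) : ℕ)) h
    omega
  · intro σ hσ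
    simp only [Finset.mem_filter, Finset.mem_univ, true_and] at hσ
    obtain ⟨hav, hσ0⟩ := hσ
    have hb : ¬ Bad σ := (avoids_iff_not_bad σ).mp hav
    obtain ⟨τ, hτ⟩ := exists_emb σ hb
    subst hσ0
    refine ⟨τ, ?_, hτ.symm⟩
    simp only [Finset.mem_filter, Finset.mem_univ, true_and]
    rw [avoids_iff_not_bad]
    have hbe := bad_emb_iff hm τ
    rw [← hτ] at hbe
    exact fun hbτ => hb (hbe.mpr hbτ)
  · intro τ hτ
    rw [exc_emb hm τ, pow_add]
    ring

lemma fpoly_succ (n : ℕ) :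
    fpoly (n + 1) = fpoly n + Polynomial.X * ∑ j ∈ Finset.range n, fpoly j := by
  have hpart := Finset.sum_fiberwise_of_maps_to
    (s := Finset.univ.filter
      (fun σ : Equiv.Perm (Fin (n + 1)) => Avoids σ p321 ∧ Avoids σ p231))
    (t := Finset.range (n + 1))
    (g := fun σ => ((σ ⟨0, n.succ_pos⟩ : Fin (n + 1)) : ℕ))
    (fun σ _ => Finset.mem_range.mpr (σ ⟨0, n.succ_pos⟩).isLt)
    (fun σ => (Polynomial.X : Polynomial ℤ) ^ exc σ)
  rw [fpoly, ← hpart]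
  have hstep : ∀ m ∈ Finset.range (n + 1),
      ∑ σ ∈ Finset.filter (fun σ => ((σ ⟨0, n.succ_pos⟩ : Fin (n + 1)) : ℕ) = m)
        (Finset.univ.filter
          (fun σ : Equiv.Perm (Fin (n + 1)) => Avoids σ p321 ∧ Avoids σ p231)),
        (Polynomial.X : Polynomial ℤ) ^ exc σ
      = Polynomial.X ^ (if m = 0 then 0 else 1) * fpoly (n - m) := by
    intro m hmr
    rw [Finset.filter_filter]
    exact fiber_sum n m (by have := Finset.mem_range.mp hmr; omega)
  rw [Finset.sum_congr rfl hstep]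
  rw [Finset.sum_range_succ']
  have h1 : ∀ i ∈ Finset.range n,
      Polynomial.X ^ (if i + 1 = 0 then 0 else 1) * fpoly (n - (i + 1))
        = Polynomial.X * fpoly (n - 1 - i) := by
    intro i hi
    rw [if_neg (Nat.succ_ne_zero i), pow_one]
    congr 2
    omega
  rw [Finset.sum_congr rfl h1]
  have h0 : (Polynomial.X : Polynomial ℤ) ^ (if (0 : ℕ) = 0 then 0 else 1) * fpoly (n - 0)
      = fpoly n := by norm_num
  rw [h0, Finset.sum_range_reflect (fun j => Polynomial.X * fpoly j) n, Finset.mul_sum]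
  exact add_comm _ _

lemma hockey (N k : ℕ) : ∑ j ∈ Finset.range N, (j.choose k) = N.choose (k + 1) := by
  induction N with
  | zero => simp
  | succ N ih =>
    rw [Finset.sum_range_succ, ih, Nat.choose_succ_succ]
    simp only [Nat.succ_eq_add_one]
    omega

lemma apoly_ext (n N : ℕ) (h : n ≤ N) :
    apoly n = ∑ k ∈ Finset.range (N + 1), (n.choose (2 * k) : Polynomial ℤ) * Polynomial.X ^ k := by
  rw [apoly]
  apply Finset.sum_subset (Finset.range_subset_range.mpr (by omega))
  intro k hk hnk
  have h2 : n < 2 * k := by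
    simp only [Finset.mem_range, not_lt] at hnk
    omega
  rw [Nat.choose_eq_zero_of_lt h2]
  simp

lemma apoly_succ (n : ℕ) :
    apoly (n + 1) = apoly n + Polynomial.X * ∑ j ∈ Finset.range n, apoly j := by
  have hXs : Polynomial.X * ∑ j ∈ Finset.range n, apoly j
      = ∑ k ∈ Finset.range (n + 1), (n.choose (2 * k + 1) : Polynomial ℤ) * Polynomial.X ^ (k + 1) := by
    have h1 : ∀ j ∈ Finset.range n, apoly j
        = ∑ k ∈ Finset.range (n + 1), (j.choose (2 * k) : Polynomial ℤ) * Polynomial.X ^ k := by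
      intro j hj
      exact apoly_ext j n (by have := Finset.mem_range.mp hj; omega)
    rw [Finset.sum_congr rfl h1, Finset.sum_comm, Finset.mul_sum]
    apply Finset.sum_congr rfl
    intro k _
    rw [← Finset.sum_mul, mul_comm, mul_assoc, ← pow_succ]
    congr 1
    · norm_cast
      exact hockey n (2 * k)
  rw [hXs, apoly_ext n (n + 1) (by omega), apoly]
  rw [Finset.sum_range_succ' (fun k => ((n + 1).choose (2 * k) : Polynomial ℤ) * Polynomial.X ^ k) (n + 1),
      Finset.sum_range_succ' (fun k => (n.choose (2 * k) : Polynomial ℤ) * Polynomial.X ^ k) (n + 1)]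
  simp only [Nat.mul_zero, Nat.choose_zero_right, pow_zero, mul_one, Nat.cast_one]
  have key : ∑ k ∈ Finset.range (n + 1),
        ((n + 1).choose (2 * (k + 1)) : Polynomial ℤ) * Polynomial.X ^ (k + 1)
      = ∑ k ∈ Finset.range (n + 1),
        ((n.choose (2 * (k + 1)) : Polynomial ℤ) * Polynomial.X ^ (k + 1)
          + (n.choose (2 * k + 1) : Polynomial ℤ) * Polynomial.X ^ (k + 1)) := by
    apply Finset.sum_congr rfl
    intro k _
    have h2 : 2 * (k + 1) = (2 * k + 1) + 1 := by omega
    rw [h2, Nat.choose_succ_succ]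
    push_cast
    ring
  rw [key, Finset.sum_add_distrib]
  ring

lemma fpoly_eq_apoly (n : ℕ) : fpoly n = apoly n := by
  induction n using Nat.strong_induction_on with
  | _ n ih =>
    match n with
    | 0 =>
      rw [fpoly_zero, apoly]
      simp
    | Nat.succ n =>
      rw [fpoly_succ, apoly_succ, ih n (by omega)]
      congr 1
      congr 1
      apply Finset.sum_congr rfl
      intro j hj
      exact ih j (by have := Finset.mem_range.mp hj; omega)

theorem stmt17 (n : ℕ) :
    (∑ σ ∈ Finset.univ.filter
        (fun σ : Equiv.Perm (Fin n) => Avoids σ p321 ∧ Avoids σ p231),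
      (Polynomial.X : Polynomial ℤ) ^ exc σ)
      = ∑ k ∈ Finset.range (n + 1),
          (n.choose (2 * k) : Polynomial ℤ) * Polynomial.X ^ k := fpoly_eq_apoly n
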